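/- If G and H are non-trivial graphs, at least one of them non-complete, and neither G nor H has an isolated vertex, then the diameter of G ⊕ H equals 2. -/

import Mathlib

open SimpleGraph

/-- The Cartesian sum (disjunctive product) of two simple graphs. -/
def cartSum {α β : Type*} (G : SimpleGraph α) (H : SimpleGraph β) :
    SimpleGraph (α × β) where
  Adj x y := G.Adj x.1 y.1 ∨ H.Adj x.2 y.2
  symm := by
    constructor
    intro x y h
    exact h.imp (fun h' => h'.symm) (fun h' => h'.symm)
  loopless := by
    constructor
    intro x h
    exact h.elim (fun h' => h'.ne rfl) (fun h' => h'.ne rfl)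

/-- Two vertices are true twins if they are distinct and have equal closed
neighborhoods. -/
def TrueTwins {α : Type*} (G : SimpleGraph α) (u v : α) : Prop :=
  u ≠ v ∧ ∀ w, (G.Adj u w ∨ u = w) ↔ (G.Adj v w ∨ v = w)

/-- A twins-free clique: a clique containing no pair of true twins. -/
def IsTFClique {α : Type*} (G : SimpleGraph α) (s : Finset α) : Prop :=
  G.IsClique ↑s ∧ ∀ u ∈ s, ∀ v ∈ s, ¬ TrueTwins G u v

/-- The twins-free clique number. -/
noncomputable def tfCliqueNum {α : Type*} (G : SimpleGraph α) [Fintype α] : ℕ :=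
  sSup {n | ∃ s : Finset α, IsTFClique G s ∧ s.card = n}

/-- A strong resolving set: every pair of distinct vertices is strongly
resolved by some vertex of `S`. -/
def IsStrongResolvingSet {α : Type*} (G : SimpleGraph α) (S : Set α) : Prop :=
  ∀ u v : α, u ≠ v → ∃ w ∈ S,
    G.dist w u = G.dist w v + G.dist v u ∨ G.dist w v = G.dist w u + G.dist u v

/-- The strong metric dimension of a graph. -/
noncomputable def sdim {α : Type*} (G : SimpleGraph α) [Fintype α] : ℕ :=
  sInf {n | ∃ S : Finset α, IsStrongResolvingSet G ↑S ∧ S.card = n}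

/-- A vertex is isolated if it has no neighbors. -/
def IsIsolated {α : Type*} (G : SimpleGraph α) (u : α) : Prop :=
  ∀ w, ¬ G.Adj u w

/-- if neither factor has an isolated vertex, `D(G ⊕ H) = 2`. -/
theorem diam_cartSum_eq_two_of_no_isolated {α β : Type*}
    [Fintype α] [Fintype β] [Nontrivial α] [Nontrivial β]
    (G : SimpleGraph α) (H : SimpleGraph β) (hnc : G ≠ ⊤ ∨ H ≠ ⊤)
    (hG : ∀ u, ¬ _root_.IsIsolated G u) (hH : ∀ v, ¬ _root_.IsIsolated H v) :
    (cartSum G H).diam = 2 := by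
  have hne : cartSum G H ≠ ⊤ := by
    rcases hnc with h | h
    · obtain ⟨a, c, hac, hnadj⟩ : ∃ a c, a ≠ c ∧ ¬ G.Adj a c := by
        by_contra hcon
        push_neg at hcon
        exact h (SimpleGraph.ext (by ext a c; simp only [top_adj]; exact ⟨fun h' => h'.ne, fun h' => hcon a c h'⟩))
      obtain ⟨b⟩ : Nonempty β := inferInstance
      intro htop
      have : (cartSum G H).Adj (a, b) (c, b) := by
        rw [htop]; simp [hac]
      exact this.elim (fun h' => hnadj h') (fun h' => h'.ne rfl)
    · obtain ⟨b, d, hbd, hnadj⟩ : ∃ b d, b ≠ d ∧ ¬ H.Adj b d := by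
        by_contra hcon
        push_neg at hcon
        exact h (SimpleGraph.ext (by ext b d; simp only [top_adj]; exact ⟨fun h' => h'.ne, fun h' => hcon b d h'⟩))
      obtain ⟨a⟩ : Nonempty α := inferInstance
      intro htop
      have : (cartSum G H).Adj (a, b) (a, d) := by
        rw [htop]; simp [hbd]
      exact this.elim (fun h' => h'.ne rfl) (fun h' => hnadj h')
  have hle : ∀ u v : α × β, (cartSum G H).edist u v ≤ 2 := by
    intro u v
    by_cases huv : u = v
    · simp [huv]
    obtain ⟨a', ha'⟩ : ∃ a', G.Adj u.1 a' := by
      have := hG u.1; simp only [_root_.IsIsolated, not_forall, not_not] at this; exact this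
    obtain ⟨b', hb'⟩ : ∃ b', H.Adj v.2 b' := by
      have := hH v.2; simp only [_root_.IsIsolated, not_forall, not_not] at this; exact this
    have h1 : (cartSum G H).Adj u (a', b') := Or.inl ha'
    have h2 : (cartSum G H).Adj (a', b') v := Or.inr hb'.symm
    calc (cartSum G H).edist u v ≤ _ := SimpleGraph.edist_le (h1.toWalk.append h2.toWalk)
    _ ≤ 2 := by simp [SimpleGraph.Walk.length_append]
  have hE : (cartSum G H).ediam ≤ 2 := SimpleGraph.ediam_le_of_edist_le hle
  have htop : (cartSum G H).ediam ≠ ⊤ := fun h => by simp [h] at hE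
  have h0 : (cartSum G H).ediam ≠ 0 := SimpleGraph.ediam_ne_zero
  have h1 : (cartSum G H).ediam ≠ 1 := fun h => hne (SimpleGraph.ediam_eq_one.mp h)
  rw [SimpleGraph.diam]
  have hle2 : (cartSum G H).ediam.toNat ≤ 2 := ENat.toNat_le_toNat hE (by simp)
  have hn0 : (cartSum G H).ediam.toNat ≠ 0 := by
    simp only [ne_eq, ENat.toNat_eq_zero]
    tauto
  have hn1 : (cartSum G H).ediam.toNat ≠ 1 := by
    intro h
    exact h1 (by rw [← ENat.coe_toNat htop, h]; rfl)
  omega
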